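/- The 4×4 matrix H(0) = [[-i, -1, 0, 0], [-1, 0, -1, 0], [0, -1, 0, -1], [0, 0, -1, i]] is not diagonalizable: the kernel of H(0) is one-dimensional while 0 is a double root of the characteristic polynomial. -/

import Mathlib

open Polynomial Complex Matrix

set_option maxHeartbeats 1000000 in
private lemma aux_charpoly_conj4 (P H : Matrix (Fin 4) (Fin 4) ℂ) (hP : IsUnit P.det) :
    (P⁻¹ * H * P).charpoly = H.charpoly := by
  have hmap : ∀ A B : Matrix (Fin 4) (Fin 4) ℂ,
      (A * B).map (C : ℂ →+* ℂ[X]) = A.map C * B.map C := fun A B => by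
    simpa using Matrix.map_mul (M := A) (N := B) (f := (C : ℂ →+* ℂ[X]))
  have h1 : (P⁻¹).map (C : ℂ →+* ℂ[X]) * P.map C = 1 := by
    rw [← hmap, Matrix.nonsing_inv_mul P hP]
    simp
  have hdet1 : ((P⁻¹).map (C : ℂ →+* ℂ[X])).det * (P.map (C : ℂ →+* ℂ[X])).det = 1 := by
    rw [← Matrix.det_mul, h1, Matrix.det_one]
  have hch : charmatrix (P⁻¹ * H * P) =
      (P⁻¹).map (C : ℂ →+* ℂ[X]) * charmatrix H * P.map C := by
    show Matrix.scalar (Fin 4) X - (RingHom.mapMatrix (C : ℂ →+* ℂ[X])) (P⁻¹ * H * P) =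
      (P⁻¹).map C *
        (Matrix.scalar (Fin 4) X - (RingHom.mapMatrix (C : ℂ →+* ℂ[X])) H) * P.map C
    rw [Matrix.mul_sub, Matrix.sub_mul]
    congr 1
    · have hcomm := (Matrix.scalar_commute (n := Fin 4) (X : ℂ[X])
        (fun r => Commute.all _ _) ((P⁻¹).map (C : ℂ →+* ℂ[X])))
      calc Matrix.scalar (Fin 4) (X : ℂ[X])
          = Matrix.scalar (Fin 4) X * ((P⁻¹).map (C : ℂ →+* ℂ[X]) * P.map C) := by
            rw [h1, mul_one]
        _ = (P⁻¹).map (C : ℂ →+* ℂ[X]) * Matrix.scalar (Fin 4) X * P.map C := by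
            rw [← Matrix.mul_assoc, hcomm.eq]
    · simp only [RingHom.mapMatrix_apply]
      rw [hmap, hmap]
  rw [Matrix.charpoly, hch, Matrix.det_mul, Matrix.det_mul, Matrix.charpoly]
  calc ((P⁻¹).map (C : ℂ →+* ℂ[X])).det * (charmatrix H).det * (P.map C).det
      = ((P⁻¹).map (C : ℂ →+* ℂ[X])).det * (P.map (C : ℂ →+* ℂ[X])).det * (charmatrix H).det := by
        ring
    _ = (charmatrix H).det := by rw [hdet1, one_mul]

set_option maxHeartbeats 1000000 in
theorem stmt_14
    (H : Matrix (Fin 4) (Fin 4) ℂ)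
    (hH : H = !![-I, -1, 0, 0; -1, 0, -1, 0; 0, -1, 0, -1; 0, 0, -1, I]) :
    Module.finrank ℂ (LinearMap.ker (Matrix.toLin' H)) = 1 ∧
    H.charpoly.rootMultiplicity 0 = 2 ∧
    ¬ ∃ P : Matrix (Fin 4) (Fin 4) ℂ, IsUnit P.det ∧ (P⁻¹ * H * P).IsDiag := by
  subst hH
  set M : Matrix (Fin 4) (Fin 4) ℂ :=
    !![-I, -1, 0, 0; -1, 0, -1, 0; 0, -1, 0, -1; 0, 0, -1, I] with hM
  -- kernel computation
  have hker : LinearMap.ker (Matrix.toLin' M) = Submodule.span ℂ {![1, -I, -1, I]} := by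
    ext x
    rw [LinearMap.mem_ker, Matrix.toLin'_apply, Submodule.mem_span_singleton]
    constructor
    · intro hx
      have e0 := congrFun hx 0
      have e1 := congrFun hx 1
      have e2 := congrFun hx 2
      simp [hM, Matrix.mulVec, dotProduct, Fin.sum_univ_four] at e0 e1 e2
      refine ⟨x 0, ?_⟩
      funext i
      fin_cases i
      · simp
      · simp; linear_combination e0
      · simp; linear_combination e1
      · simp; linear_combination -e0 + e2
    · rintro ⟨a, rfl⟩
      funext i
      fin_cases i <;>
        simp [hM, Matrix.mulVec, dotProduct, Fin.sum_univ_four] <;> ring_nf <;>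
        simp [Complex.I_sq]
  have hfr : Module.finrank ℂ (LinearMap.ker (Matrix.toLin' M)) = 1 := by
    rw [hker, finrank_span_singleton]
    intro hv
    have := congrFun hv 0
    simp at this
  -- characteristic polynomial
  have hcp : M.charpoly = X ^ 2 * (X ^ 2 - C 2) := by
    have hc : charmatrix M = !![X + C I, 1, 0, 0; 1, X, 1, 0; 0, 1, X, 1; 0, 0, 1, X - C I] := by
      refine Matrix.ext fun i j => ?_
      fin_cases i <;> fin_cases j <;>
        simp [hM, Matrix.charmatrix_apply, Matrix.diagonal_apply, Matrix.vecHead, Matrix.vecTail]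
    rw [Matrix.charpoly, hc, Matrix.det_succ_row_zero]
    simp [Fin.sum_univ_succ, Matrix.det_fin_three, Matrix.submatrix_apply, Fin.succAbove]
    ring_nf
    simp only [← map_pow, Complex.I_sq, _root_.map_neg, _root_.map_one, map_ofNat]
    ring
  have hrm : M.charpoly.rootMultiplicity 0 = 2 := by
    have h2 : ((X : ℂ[X]) ^ 2 - C 2) ≠ 0 := by
      intro h
      have := congrArg (Polynomial.eval 0) h
      simp at this
    rw [hcp, rootMultiplicity_mul (mul_ne_zero (pow_ne_zero 2 Polynomial.X_ne_zero) h2)]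
    have hXp : rootMultiplicity (0 : ℂ) ((X : ℂ[X]) ^ 2) = 2 := by
      simpa using Polynomial.rootMultiplicity_X_sub_C_pow (0 : ℂ) 2
    have hq : rootMultiplicity (0 : ℂ) ((X : ℂ[X]) ^ 2 - C 2) = 0 := by
      rw [Polynomial.rootMultiplicity_eq_zero_iff]
      intro h
      simp [Polynomial.IsRoot] at h
    rw [hXp, hq]
  refine ⟨hfr, hrm, ?_⟩
  rintro ⟨P, hP, hdiag⟩
  set D := P⁻¹ * M * P with hD
  have hDdiag : Matrix.diagonal D.diag = D := hdiag.diagonal_diag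
  -- rank of M is 3
  have hrankM : M.rank = 3 := by
    have := LinearMap.finrank_range_add_finrank_ker (Matrix.mulVecLin M)
    rw [← Matrix.toLin'_apply'] at this
    rw [hfr] at this
    simp only [Module.finrank_pi, Fintype.card_fin] at this
    have hrank : M.rank = Module.finrank ℂ (LinearMap.range (Matrix.toLin' M)) := by
      rw [Matrix.rank, Matrix.toLin'_apply']
    omega
  -- rank of D equals rank of M
  have hrankD : D.rank = 3 := by
    rw [hD, Matrix.rank_mul_eq_left_of_isUnit_det P _ hP,
      Matrix.rank_mul_eq_right_of_isUnit_det P⁻¹ M (Matrix.isUnit_nonsing_inv_det P hP), hrankM]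
  -- charpoly of D
  have hcpD : D.charpoly = M.charpoly := aux_charpoly_conj4 P M hP
  have hprod : D.charpoly = ∏ i : Fin 4, (X - C (D.diag i)) := by
    conv_lhs => rw [← hDdiag]
    rw [Matrix.charpoly_of_upperTriangular _ (Matrix.blockTriangular_diagonal _)]
    simp [Matrix.diagonal_apply_eq]
  -- count of zero diagonal entries is 2
  have hcount : (Finset.univ.filter (fun i => D.diag i = 0)).card = 2 := by
    have hroots : D.charpoly.roots = Finset.univ.val.map D.diag := by
      rw [hprod]
      rw [Finset.prod_eq_multiset_prod]
      simpa [Multiset.map_map, Function.comp] using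
        Polynomial.roots_multiset_prod_X_sub_C (Finset.univ.val.map D.diag)
    have := Polynomial.count_roots (a := (0 : ℂ)) D.charpoly
    rw [hroots, hcpD, hrm, Multiset.count_map] at this
    rw [← this]
    simp only [Finset.card, Finset.filter_val]
    congr 1
    exact Multiset.filter_congr fun i _ => by constructor <;> (intro h; exact h.symm)
  -- rank of D is 2
  have hrankD2 : D.rank = 2 := by
    rw [← hDdiag, Matrix.rank_diagonal, Fintype.card_subtype]
    have := Finset.card_filter_add_card_filter_not
      (s := (Finset.univ : Finset (Fin 4))) (p := fun i => D.diag i = 0)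
    rw [hcount] at this
    simp only [Finset.card_univ, Fintype.card_fin] at this
    convert (by omega : (Finset.univ.filter (fun i => ¬ D.diag i = 0)).card = 2) using 2
  rw [hrankD] at hrankD2
  exact absurd hrankD2 (by norm_num)
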